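/- Let $G$ be a finite directed graph with no sinks satisfying Condition (L), and let $v \in G^0$. Then there exists a vector $n \in \prod_{G^0}\mathbb{N}$ such that every entry of $(A_G - I)n$ is a nonnegative integer and $((A_G - I)n)(v) \geq 1$. -/

import Mathlib

open scoped BigOperators

/-- `l` is a path: consecutive edges are composable. -/
def IsPathList {V E : Type*} (r s : E → V) (l : List E) : Prop :=
  l.Chain' (fun a b => r a = s b)

/-- `l` is a loop: a nonempty path whose source equals its range. -/
def IsLoopList {V E : Type*} (r s : E → V) (l : List E) : Prop :=
  IsPathList r s l ∧ ∃ h : l ≠ [], s (l.head h) = r (l.getLast h)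

/-- The loop `l` has an exit: an edge `e` with the same source as some edge of
`l` but distinct from it. -/
def HasExit {V E : Type*} (s : E → V) (l : List E) : Prop :=
  ∃ e : E, ∃ f ∈ l, s e = s f ∧ e ≠ f

/-- Condition (L): every loop has an exit. -/
def CondL {V E : Type*} (r s : E → V) : Prop :=
  ∀ l : List E, l ≠ [] → IsLoopList r s l → HasExit s l

/-- `v ≥ w`: there is a (possibly empty) path from `v` to `w`. -/
def Reach {V E : Type*} (r s : E → V) : V → V → Prop :=
  Relation.ReflTransGen (fun a b => ∃ e, s e = a ∧ r e = b)

/-- Left multiplication by the vertex matrix `A_G` on `∏_{G⁰} ℤ`: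
`(A y)(v) = ∑_{s(e)=v} y(r e)`. -/
noncomputable def Aact {V E : Type*} (r s : E → V) (y : V → ℤ) (v : V) : ℤ :=
  ∑ᶠ e ∈ {e : E | s e = v}, y (r e)

open Classical in
/-- Number of paths of length `k` starting at `w`. -/
noncomputable def Nvec {V E : Type*} [Fintype E] (r s : E → V) : ℕ → V → ℕ
  | 0, _ => 1
  | (k+1), w => ∑ e ∈ Finset.univ.filter (fun e => s e = w), Nvec r s k (r e)

open Classical

lemma Nvec_pos {V E : Type*} [Fintype E] (r s : E → V)
    (hnosink : ∀ v : V, ∃ e : E, s e = v) :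
    ∀ (k : ℕ) (w : V), 1 ≤ Nvec r s k w := by
  intro k
  induction k with
  | zero => intro w; simp [Nvec]
  | succ k ih =>
    intro w
    obtain ⟨e, he⟩ := hnosink w
    calc 1 ≤ Nvec r s k (r e) := ih _
      _ ≤ Nvec r s (k+1) w := by
        rw [show Nvec r s (k+1) w
            = ∑ e ∈ Finset.univ.filter (fun e => s e = w), Nvec r s k (r e) from rfl]
        exact Finset.single_le_sum (f := fun e => Nvec r s k (r e))
          (fun i _ => Nat.zero_le _)
          (Finset.mem_filter.mpr ⟨Finset.mem_univ e, he⟩)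

lemma Nvec_mono {V E : Type*} [Fintype E] (r s : E → V)
    (hnosink : ∀ v : V, ∃ e : E, s e = v) :
    ∀ (k : ℕ) (w : V), Nvec r s k w ≤ Nvec r s (k+1) w := by
  intro k
  induction k with
  | zero =>
    intro w
    obtain ⟨e, he⟩ := hnosink w
    calc Nvec r s 0 w = Nvec r s 0 (r e) := rfl
      _ ≤ Nvec r s 1 w := by
        rw [show Nvec r s 1 w
            = ∑ e ∈ Finset.univ.filter (fun e => s e = w), Nvec r s 0 (r e) from rfl]
        exact Finset.single_le_sum (f := fun e => Nvec r s 0 (r e))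
          (fun i _ => Nat.zero_le _)
          (Finset.mem_filter.mpr ⟨Finset.mem_univ e, he⟩)
  | succ k ih =>
    intro w
    show (∑ e ∈ _, _) ≤ ∑ e ∈ _, _
    exact Finset.sum_le_sum fun e _ => ih (r e)

lemma Nvec_strict {V E : Type*} [Fintype E] (r s : E → V)
    (hnosink : ∀ v : V, ∃ e : E, s e = v)
    (edge : V → E) (hedge : ∀ w, s (edge w) = w) :
    ∀ (k : ℕ) (w : V),
    (∃ e e', s e = (fun u => r (edge u))^[k] w ∧ s e' = (fun u => r (edge u))^[k] w ∧ e ≠ e') →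
    Nvec r s k w < Nvec r s (k+1) w := by
  intro k
  induction k with
  | zero =>
    rintro w ⟨e, e', he, he', hne⟩
    have h1 : Nvec r s 1 w = (Finset.univ.filter (fun e => s e = w)).card := by
      rw [show Nvec r s 1 w
          = ∑ e ∈ Finset.univ.filter (fun e => s e = w), Nvec r s 0 (r e) from rfl]
      simp [Nvec]
    rw [show Nvec r s 0 w = 1 from rfl, h1, Finset.one_lt_card]
    exact ⟨e, by simpa using he, e', by simpa using he', hne⟩
  | succ k ih =>
    rintro w h2
    show (∑ e ∈ _, _) < ∑ e ∈ _, _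
    apply Finset.sum_lt_sum (fun e _ => Nvec_mono r s hnosink k (r e))
    refine ⟨edge w, by simp [hedge], ?_⟩
    apply ih
    obtain ⟨e, e', he, he', hne⟩ := h2
    rw [Function.iterate_succ_apply] at he he'
    exact ⟨e, e', he, he', hne⟩

/-- the canonical path list following `edge` -/
def chainL {V E : Type*} (r : E → V) (edge : V → E) : V → ℕ → List E
  | _, 0 => []
  | w, (k+1) => edge w :: chainL r edge (r (edge w)) k

lemma chainL_path {V E : Type*} (r s : E → V) (edge : V → E)
    (hedge : ∀ w, s (edge w) = w) :
    ∀ (k : ℕ) (w : V), IsPathList r s (chainL r edge w k) := by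
  intro k
  induction k with
  | zero => intro w; exact List.isChain_nil
  | succ k ih =>
    intro w
    show List.Chain' _ (edge w :: chainL r edge (r (edge w)) k)
    show List.IsChain _ (edge w :: chainL r edge (r (edge w)) k)
    rw [List.isChain_cons]
    refine ⟨?_, ih _⟩
    intro b hb
    cases k with
    | zero => simp [chainL] at hb
    | succ k =>
      simp only [chainL, List.head?_cons, Option.mem_some_iff] at hb
      rw [← hb, hedge]

lemma chainL_mem {V E : Type*} (r s : E → V) (edge : V → E)
    (hedge : ∀ w, s (edge w) = w) :
    ∀ (k : ℕ) (w : V) (f : E), f ∈ chainL r edge w k →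
    ∃ m, s f = (fun u => r (edge u))^[m] w := by
  intro k
  induction k with
  | zero => intro w f hf; simp [chainL] at hf
  | succ k ih =>
    intro w f hf
    simp only [chainL, List.mem_cons] at hf
    rcases hf with hf | hf
    · exact ⟨0, by simp [hf, hedge]⟩
    · obtain ⟨m, hm⟩ := ih _ _ hf
      exact ⟨m + 1, by rw [hm, Function.iterate_succ_apply]⟩

lemma chainL_last {V E : Type*} (r : E → V) (edge : V → E) :
    ∀ (k : ℕ) (w : V),
    r ((chainL r edge w (k+1)).getLast (List.cons_ne_nil _ _)) =
      (fun u => r (edge u))^[k+1] w := by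
  intro k
  induction k with
  | zero => intro w; rfl
  | succ k ih =>
    intro w
    show r ((edge w :: chainL r edge (r (edge w)) (k+1)).getLast _) = _
    rw [List.getLast_cons (by show (_ :: _ : List E) ≠ []; simp)]
    rw [ih (r (edge w)), ← Function.iterate_succ_apply]

lemma Aact_Nvec {V E : Type*} [Fintype E] (r s : E → V) (k : ℕ) (w : V) :
    Aact r s (fun u => (Nvec r s k u : ℤ)) w = (Nvec r s (k+1) w : ℤ) := by
  unfold Aact
  have h : {e : E | s e = w} = ↑(Finset.univ.filter fun e => s e = w) := by
    ext e; simp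
  rw [h, finsum_mem_coe_finset]
  rw [show Nvec r s (k+1) w
      = ∑ e ∈ Finset.univ.filter (fun e => s e = w), Nvec r s k (r e) from rfl]
  push_cast
  rfl

theorem exists_nat_vector_nonneg_and_pos_at
    {V E : Type*} [Fintype V] [Fintype E] (r s : E → V)
    (hnosink : ∀ v : V, ∃ e : E, s e = v)
    (hL : CondL r s) (v : V) :
    ∃ n : V → ℕ,
      (∀ w : V, 0 ≤ Aact r s (fun u => (n u : ℤ)) w - (n w : ℤ)) ∧
      1 ≤ Aact r s (fun u => (n u : ℤ)) v - (n v : ℤ) := by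
  classical
  set edge : V → E := fun w => (hnosink w).choose with hedgedef
  have hedge : ∀ w, s (edge w) = w := fun w => (hnosink w).choose_spec
  set F : V → V := fun u => r (edge u) with hF
  have key : ∃ k, ∃ e e', s e = F^[k] v ∧ s e' = F^[k] v ∧ e ≠ e' := by
    by_contra hcon
    push_neg at hcon
    obtain ⟨i, j, hij, heq⟩ := Finite.exists_ne_map_eq_of_infinite (fun n : ℕ => F^[n] v)
    wlog hlt : i < j generalizing i j
    · exact this j i hij.symm heq.symm (by omega)
    set m := j - i - 1 with hm
    set l := chainL r edge (F^[i] v) (m+1) with hl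
    have hlne : l ≠ [] := List.cons_ne_nil _ _
    have hloop : IsLoopList r s l := by
      refine ⟨chainL_path r s edge hedge _ _, hlne, ?_⟩
      have hhead : l.head hlne = edge (F^[i] v) := rfl
      rw [hhead, chainL_last r edge, hedge]
      show F^[i] v = F^[m+1] (F^[i] v)
      rw [← Function.iterate_add_apply]
      have hji : m + 1 + i = j := by omega
      rw [hji, ← heq]
    obtain ⟨e, f, hf, hss, hne⟩ := hL l hlne hloop
    obtain ⟨m', hm'⟩ := chainL_mem r s edge hedge _ _ _ hf
    have h1 : s e = F^[m' + i] v := by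
      rw [hss, hm', ← Function.iterate_add_apply]
    have h2 : s f = F^[m' + i] v := by
      rw [hm', ← Function.iterate_add_apply]
    exact hne (hcon (m' + i) e f h1 h2)
  obtain ⟨k, hk⟩ := key
  refine ⟨Nvec r s k, ?_, ?_⟩
  · intro w
    rw [Aact_Nvec]
    have := Nvec_mono r s hnosink k w
    omega
  · rw [Aact_Nvec]
    have := Nvec_strict r s hnosink edge hedge k v hk
    omega
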